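/- arXiv:2202.04463 — 2 statements merged into one kernel-verified Lean document; each statement's English description precedes it below -/
import Mathlib

section
/- In the Coxeter group W of type F₄, let u be an element of the parabolic subgroup P generated by s₂, s₃, s₄ whose length ℓ(u) is maximal among the lengths of elements of P. Then w₀ · s₁ is conjugate in W to u. -/
set_option maxRecDepth 40000

namespace Stmt17aux

open CoxeterSystem List

abbrev Mt := Matrix (Fin 4) (Fin 4) ℤ
abbrev V := Fin 4 → ℤ
abbrev csF := CoxeterMatrix.F₄.toCoxeterSystem
abbrev Wg := CoxeterMatrix.F₄.Group

def SM : Fin 4 → Mt :=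
  ![!![-1,1,0,0; 0,1,0,0; 0,0,1,0; 0,0,0,1],
    !![1,0,0,0; 1,-1,1,0; 0,0,1,0; 0,0,0,1],
    !![1,0,0,0; 0,1,0,0; 0,2,-1,1; 0,0,0,1],
    !![1,0,0,0; 0,1,0,0; 0,0,1,0; 0,0,1,-1]]

def av : Fin 4 → V := ![![1,0,0,0], ![0,1,0,0], ![0,0,1,0], ![0,0,0,1]]

lemma lift_ok : CoxeterMatrix.F₄.IsLiftable SM := by
  intro i j
  fin_cases i <;> fin_cases j <;> decide

def φ : Wg →* Mt := csF.lift ⟨SM, lift_ok⟩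

@[simp] lemma φ_simple (i : Fin 4) : φ (csF.simple i) = SM i :=
  csF.lift_apply_simple lift_ok i

@[simp] lemma φ_simple' (i : Fin 4) : φ (CoxeterMatrix.F₄.simple i) = SM i := by
  rw [← CoxeterMatrix.toCoxeterSystem_simple]; exact φ_simple i

lemma φ_wordProd (ω : List (Fin 4)) : φ (csF.wordProd ω) = (ω.map SM).prod := by
  induction ω with
  | nil => simp [wordProd]
  | cons x ω ih => rw [wordProd_cons, map_mul, φ_simple, List.map_cons, List.prod_cons, ih]


def PR : Finset V :=
  {![0,0,0,1], ![0,0,1,0], ![0,0,1,1], ![0,1,0,0], ![0,1,1,0], ![0,1,1,1],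
   ![0,1,2,0], ![0,1,2,1], ![0,1,2,2], ![1,0,0,0], ![1,1,0,0], ![1,1,1,0],
   ![1,1,1,1], ![1,1,2,0], ![1,1,2,1], ![1,1,2,2], ![1,2,2,0], ![1,2,2,1],
   ![1,2,2,2], ![1,2,3,1], ![1,2,3,2], ![1,2,4,2], ![1,3,4,2], ![2,3,4,2]}

def conePos (v : V) : Prop := ∀ k, 0 ≤ v k

noncomputable def Ninv (g : Mt) : ℕ := (PR.filter (fun b => -(g.mulVec b) ∈ PR)).card

lemma dA : ∀ i, (SM i).mulVec (av i) = -av i := by decide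
lemma dB : ∀ i : Fin 4, ∀ b ∈ PR, b ≠ av i → (SM i).mulVec b ∈ PR := by decide
lemma dC : ∀ b ∈ PR, -b ∉ PR := by decide
lemma dD : ∀ i : Fin 4, ∀ b ∈ PR, ((SM i).mulVec b ∈ PR ∨ -((SM i).mulVec b) ∈ PR) := by decide
instance (v : V) : Decidable (conePos v) := inferInstanceAs (Decidable (∀ k, 0 ≤ v k))

lemma dE : ∀ b ∈ PR, ¬ conePos (-b) := by decide
lemma dF : ∀ i, av i ∈ PR := by decide
lemma dG : ∀ b ∈ PR, 0 ≤ b 0 := by decide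
lemma dSq : ∀ i, SM i * SM i = 1 := by decide
lemma cardPR : PR.card = 24 := by decide


def isRoot (v : V) : Prop := v ∈ PR ∨ -v ∈ PR

lemma root_av (i : Fin 4) : isRoot (av i) := Or.inl (dF i)

lemma root_SM (i : Fin 4) (v : V) (h : isRoot v) : isRoot ((SM i).mulVec v) := by
  rcases h with h | h
  · exact dD i v h
  · rcases dD i (-v) h with h' | h'
    · right
      rwa [Matrix.mulVec_neg] at h'
    · left
      rwa [Matrix.mulVec_neg, neg_neg] at h'

lemma root_act (w : Wg) : ∀ v : V, isRoot v → isRoot ((φ w).mulVec v) := by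
  induction w using CoxeterSystem.simple_induction csF with
  | simple i => intro v hv; rw [φ_simple]; exact root_SM i v hv
  | one => intro v hv; rw [map_one, Matrix.one_mulVec]; exact hv
  | mul w w' hw hw' =>
      intro v hv
      rw [map_mul, ← Matrix.mulVec_mulVec]
      exact hw _ (hw' _ hv)

lemma SM_invol (i : Fin 4) (x : V) : (SM i).mulVec ((SM i).mulVec x) = x := by
  rw [Matrix.mulVec_mulVec, dSq, Matrix.one_mulVec]

lemma SM_inj (i : Fin 4) : Function.Injective ((SM i).mulVec) := by
  intro a b hab
  rw [← SM_invol i a, hab, SM_invol]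

lemma invStep (g : Mt) (i : Fin 4) (h : -(g.mulVec (av i)) ∈ PR) :
    Ninv (g * SM i) + 1 = Ninv g := by
  classical
  have himg : Finset.image (fun b => (SM i).mulVec b)
      ((PR.filter (fun b => -(g.mulVec b) ∈ PR)).erase (av i))
      = PR.filter (fun b => -((g * SM i).mulVec b) ∈ PR) := by
    ext b
    simp only [Finset.mem_image, Finset.mem_erase, Finset.mem_filter]
    constructor
    · rintro ⟨c, ⟨hne, hc, hgc⟩, rfl⟩
      refine ⟨dB i c hc hne, ?_⟩
      rwa [← Matrix.mulVec_mulVec, SM_invol]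
    · rintro ⟨hb, hneg⟩
      rw [← Matrix.mulVec_mulVec] at hneg
      have hbne : b ≠ av i := by
        rintro rfl
        rw [dA, Matrix.mulVec_neg, neg_neg] at hneg
        exact dC _ hneg h
      refine ⟨(SM i).mulVec b, ⟨?_, dB i b hb hbne, hneg⟩, SM_invol i b⟩
      intro hEq
      have hbneg : b = -av i := by rw [← SM_invol i b, hEq, dA]
      rw [hbneg] at hb
      exact dC _ (dF i) hb
  have hmem : av i ∈ PR.filter (fun b => -(g.mulVec b) ∈ PR) :=
    Finset.mem_filter.2 ⟨dF i, h⟩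
  have h1 : Ninv (g * SM i) =
      ((PR.filter (fun b => -(g.mulVec b) ∈ PR)).erase (av i)).card := by
    rw [Ninv, ← himg, Finset.card_image_of_injective _ (SM_inj i)]
  rw [h1, Ninv, Finset.card_erase_add_one hmem]

lemma dM : ∀ i j : Fin 4, CoxeterMatrix.F₄ i j ≤ 4 ∧ (i ≠ j → 2 ≤ CoxeterMatrix.F₄ i j) := by
  intro i j
  fin_cases i <;> fin_cases j <;> decide

lemma dDih : ∀ i j : Fin 4, i ≠ j → ∀ k : Fin 5, 1 ≤ (k : ℕ) → (k : ℕ) < CoxeterMatrix.F₄ i j →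
    (0 ≤ (((CoxeterSystem.alternatingWord i j (k : ℕ)).map SM).prod.mulVec (av i)) i ∧
     0 ≤ (((CoxeterSystem.alternatingWord i j (k : ℕ)).map SM).prod.mulVec (av i)) j ∧
     ((CoxeterSystem.alternatingWord i j (k : ℕ)).map SM).prod.mulVec (av i) =
       (((CoxeterSystem.alternatingWord i j (k : ℕ)).map SM).prod.mulVec (av i)) i • av i +
       (((CoxeterSystem.alternatingWord i j (k : ℕ)).map SM).prod.mulVec (av i)) j • av j) := by
  decide

lemma dihedral_nf (i j : Fin 4) (hij : i ≠ j) (ω : List (Fin 4))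
    (hl : ∀ x ∈ ω, x = i ∨ x = j) :
    ∃ (k : ℕ) (a b : Fin 4), ((a = i ∧ b = j) ∨ (a = j ∧ b = i)) ∧
      k ≤ ω.length ∧ k ≤ CoxeterMatrix.F₄ i j ∧
      csF.wordProd ω = csF.wordProd (alternatingWord a b k) := by
  induction ω using List.reverseRecOn with
  | nil => exact ⟨0, i, j, Or.inl ⟨rfl, rfl⟩, le_rfl, Nat.zero_le _, rfl⟩
  | append_singleton τ x ih =>
    have hlτ : ∀ y ∈ τ, y = i ∨ y = j := fun y hy => hl y (by simp [hy])
    have hx : x = i ∨ x = j := hl x (by simp)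
    obtain ⟨k, a, b, hab, hk, hkM, heq⟩ := ih hlτ
    have h2M : 2 ≤ CoxeterMatrix.F₄ i j := (dM i j).2 hij
    have hπ : csF.wordProd (τ ++ [x]) = csF.wordProd τ * csF.simple x := by
      rw [wordProd_append, wordProd_singleton]
    match k, hk, hkM, heq with
    | 0, hk, hkM, heq =>
      have hone : csF.wordProd τ = 1 := by rw [heq]; rfl
      rcases hx with rfl | rfl
      · refine ⟨1, j, x, Or.inr ⟨rfl, rfl⟩, by simp, by omega, ?_⟩
        rw [hπ, hone, one_mul]
        show csF.simple x = csF.wordProd (alternatingWord x j 0 ++ [x])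
        rw [wordProd_append, wordProd_singleton]
        show csF.simple x = csF.wordProd [] * csF.simple x
        rw [wordProd_nil, one_mul]
      · refine ⟨1, i, x, Or.inl ⟨rfl, rfl⟩, by simp, by omega, ?_⟩
        rw [hπ, hone, one_mul]
        show csF.simple x = csF.wordProd (alternatingWord x i 0 ++ [x])
        rw [wordProd_append, wordProd_singleton]
        show csF.simple x = csF.wordProd [] * csF.simple x
        rw [wordProd_nil, one_mul]
    | k' + 1, hk, hkM, heq =>
      have hconc : csF.wordProd (alternatingWord a b (k' + 1))
          = csF.wordProd (alternatingWord b a k') * csF.simple b := by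
        rw [alternatingWord_succ]
        exact csF.wordProd_concat b (alternatingWord b a k')
      by_cases hxb : x = b
      · refine ⟨k', b, a, ?_, by simp; omega, by omega, ?_⟩
        · tauto
        · rw [hπ, heq, hconc, hxb, mul_assoc, simple_mul_simple_self, mul_one]
      · have hxa : x = a := by
          rcases hab with ⟨ha, hb⟩ | ⟨ha, hb⟩ <;> subst ha <;> subst hb <;> tauto
        by_cases hkm2 : k' + 2 ≤ CoxeterMatrix.F₄ i j
        · refine ⟨k' + 2, b, a, ?_, by simp; omega, hkm2, ?_⟩
          · tauto
          · rw [hπ, heq, hxa]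
            have : csF.wordProd (alternatingWord b a (k' + 2))
                = csF.wordProd (alternatingWord a b (k' + 1)) * csF.simple a := by
              rw [alternatingWord_succ b a (k' + 1)]
              exact csF.wordProd_concat a (alternatingWord a b (k' + 1))
            rw [this]
        · have hM : k' + 1 = CoxeterMatrix.F₄ i j := by omega
          have hMab : CoxeterMatrix.F₄ a b = CoxeterMatrix.F₄ i j := by
            rcases hab with ⟨ha, hb⟩ | ⟨ha, hb⟩ <;> rw [ha, hb]
            exact CoxeterMatrix.symmetric _ j i
          have hbraid : csF.wordProd (alternatingWord a b (k' + 1))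
              = csF.wordProd (alternatingWord b a (k' + 1)) := by
            have := csF.wordProd_braidWord_eq a b
            rw [CoxeterSystem.braidWord, CoxeterSystem.braidWord,
              CoxeterMatrix.F₄.symmetric b a, hMab, ← hM] at this
            exact this
          have hconc2 : csF.wordProd (alternatingWord b a (k' + 1))
              = csF.wordProd (alternatingWord a b k') * csF.simple a := by
            rw [alternatingWord_succ]
            exact csF.wordProd_concat a (alternatingWord a b k')
          refine ⟨k', a, b, hab, by simp; omega, by omega, ?_⟩
          rw [hπ, heq, hxa, hbraid, hconc2, mul_assoc, simple_mul_simple_self, mul_one]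


lemma coneAv : ∀ i, conePos (av i) := by decide

lemma cone_smul_add (p q : ℤ) (x y : V) (hp : 0 ≤ p) (hq : 0 ≤ q)
    (hx : conePos x) (hy : conePos y) : conePos (p • x + q • y) := by
  intro k
  have h1 := mul_nonneg hp (hx k)
  have h2 := mul_nonneg hq (hy k)
  simp only [Pi.add_apply, Pi.smul_apply, smul_eq_mul]
  omega

theorem tits : ∀ (n : ℕ) (w : Wg), csF.length w = n → ∀ i : Fin 4,
    ¬ csF.IsRightDescent w i → conePos ((φ w).mulVec (av i)) := by
  intro n
  induction n using Nat.strong_induction_on with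
  | _ n ih =>
    intro w hw i hi
    rcases eq_or_ne w 1 with rfl | hne
    · rw [map_one, Matrix.one_mulVec]
      exact coneAv i
    · obtain ⟨j, hj⟩ := csF.exists_rightDescent_of_ne_one hne
      have hij : i ≠ j := fun h => hi (h ▸ hj)
      classical
      have hPex : ∃ l : ℕ, ∃ v : Wg, ∃ ω : List (Fin 4),
          (∀ x ∈ ω, x = i ∨ x = j) ∧ w = v * csF.wordProd ω ∧
          csF.length w = csF.length v + ω.length ∧ csF.length v = l :=
        ⟨csF.length w, w, [], by simp, by rw [wordProd_nil, mul_one], by simp, rfl⟩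
      obtain ⟨v, ω, hlet, hwv, hlen, hlv⟩ := Nat.find_spec hPex
      have hvd : ∀ x : Fin 4, (x = i ∨ x = j) → ¬ csF.IsRightDescent v x := by
        intro x hx hd
        have hd' := (csF.isRightDescent_iff).1 hd
        refine Nat.find_min hPex (m := csF.length (v * csF.simple x)) (by omega) ?_
        refine ⟨v * csF.simple x, x :: ω, ?_, ?_, ?_, rfl⟩
        · intro y hy
          rcases List.mem_cons.1 hy with rfl | hy
          · exact hx
          · exact hlet y hy
        · rw [wordProd_cons, ← mul_assoc, mul_assoc v, simple_mul_simple_self, mul_one]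
          exact hwv
        · rw [List.length_cons]
          omega
      have hu1 : csF.wordProd ω ≠ 1 := by
        intro h1
        rw [h1, mul_one] at hwv
        exact hvd j (Or.inr rfl) (hwv ▸ hj)
      have hω1 : 1 ≤ ω.length := by
        rcases ω with _ | ⟨y, ω'⟩
        · exact absurd (wordProd_nil csF) hu1
        · simp
      have hlvn : csF.length v < n := by omega
      obtain ⟨k, a, b, hab, hkl, hkM, heq⟩ := dihedral_nf i j hij ω hlet
      have hi' := (csF.not_isRightDescent_iff).1 hi
      have hcontra : ∀ (τ : List (Fin 4)), csF.wordProd ω = csF.wordProd τ * csF.simple i →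
          τ.length + 1 ≤ ω.length → False := by
        intro τ hτ hτl
        have h1 : w * csF.simple i = v * csF.wordProd τ := by
          rw [hwv, hτ, ← mul_assoc, simple_mul_simple_cancel_right]
        have h2 : csF.length (w * csF.simple i) ≤ csF.length v + τ.length := by
          rw [h1]
          exact (csF.length_mul_le v (csF.wordProd τ)).trans
            (by have := csF.length_wordProd_le τ; omega)
        omega
      match k, hkl, hkM, heq with
      | 0, hkl, hkM, heq =>
          exact absurd (by rw [heq]; rfl) hu1
      | k' + 1, hkl, hkM, heq =>
          have hconc : csF.wordProd (alternatingWord a b (k' + 1))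
              = csF.wordProd (alternatingWord b a k') * csF.simple b := by
            rw [alternatingWord_succ]
            exact csF.wordProd_concat b (alternatingWord b a k')
          rcases hab with ⟨ha, hb⟩ | ⟨ha, hb⟩
          · -- pattern (i, j) : word ends with j
            rw [ha, hb] at heq hconc
            by_cases hkmax : k' + 1 = CoxeterMatrix.F₄ i j
            · -- switch via braid relation; then it ends with i : contradiction
              have hbraid : csF.wordProd (alternatingWord i j (k' + 1))
                  = csF.wordProd (alternatingWord j i (k' + 1)) := by
                have h := csF.wordProd_braidWord_eq i j
                rw [CoxeterSystem.braidWord, CoxeterSystem.braidWord,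
                  CoxeterMatrix.symmetric _ j i, ← hkmax] at h
                exact h
              have hconc2 : csF.wordProd (alternatingWord j i (k' + 1))
                  = csF.wordProd (alternatingWord i j k') * csF.simple i := by
                rw [alternatingWord_succ]
                exact csF.wordProd_concat i (alternatingWord i j k')
              exact absurd (hcontra (alternatingWord i j k')
                (by rw [heq, hbraid, hconc2])
                (by rw [length_alternatingWord]; omega)) (not_false)
            · have hklt : (k' + 1) < CoxeterMatrix.F₄ i j := lt_of_le_of_ne hkM hkmax
              have hmle : CoxeterMatrix.F₄ i j ≤ 4 := (dM i j).1
              obtain ⟨hp, hq, hvec⟩ := dDih i j hij ⟨k' + 1, by omega⟩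
                (Nat.succ_le_succ (Nat.zero_le _)) hklt
              set X : Mt := ((alternatingWord i j (k' + 1)).map SM).prod with hX
              set p : ℤ := (X.mulVec (av i)) i with hpdef
              set q : ℤ := (X.mulVec (av i)) j with hqdef
              have hact : (φ w).mulVec (av i)
                  = p • ((φ v).mulVec (av i)) + q • ((φ v).mulVec (av j)) := by
                rw [hwv, map_mul, heq, φ_wordProd, ← hX, ← Matrix.mulVec_mulVec, hvec,
                  Matrix.mulVec_add, Matrix.mulVec_smul, Matrix.mulVec_smul]
              rw [hact]
              exact cone_smul_add _ _ _ _ hp hq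
                (ih (csF.length v) hlvn v rfl i (hvd i (Or.inl rfl)))
                (ih (csF.length v) hlvn v rfl j (hvd j (Or.inr rfl)))
          · -- pattern (j, i) : word ends with i : contradiction
            rw [ha, hb] at heq hconc
            exact absurd (hcontra (alternatingWord i j k') (heq.trans hconc)
              (by rw [length_alternatingWord]; omega)) (not_false)


lemma descent_neg (w : Wg) (i : Fin 4) (hd : csF.IsRightDescent w i) :
    -((φ w).mulVec (av i)) ∈ PR := by
  have hnd : ¬ csF.IsRightDescent (w * csF.simple i) i :=
    (csF.isRightDescent_iff_not_isRightDescent_mul).1 hd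
  have hcone : conePos ((φ (w * csF.simple i)).mulVec (av i)) :=
    tits _ (w * csF.simple i) rfl i hnd
  have hroot : isRoot ((φ (w * csF.simple i)).mulVec (av i)) :=
    root_act _ _ (root_av i)
  have hpos : ((φ (w * csF.simple i)).mulVec (av i)) ∈ PR := by
    rcases hroot with h | h
    · exact h
    · exact absurd (by rw [neg_neg]; exact hcone) (dE _ h)
  have hkey : (φ w).mulVec (av i) = -((φ (w * csF.simple i)).mulVec (av i)) := by
    have h1 : φ (w * csF.simple i) * SM i = φ w := by
      rw [map_mul, φ_simple, mul_assoc, dSq, mul_one]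
    rw [← h1, ← Matrix.mulVec_mulVec, dA, Matrix.mulVec_neg]
  rw [hkey, neg_neg]
  exact hpos

lemma len_eq : ∀ (n : ℕ) (w : Wg), csF.length w = n → n = Ninv (φ w) := by
  intro n
  induction n using Nat.strong_induction_on with
  | _ n ih =>
    intro w hw
    rcases eq_or_ne w 1 with rfl | hne
    · rw [map_one, csF.length_one] at *
      have h0 : Ninv (1 : Mt) = 0 := by decide
      omega
    · obtain ⟨i, hd⟩ := csF.exists_rightDescent_of_ne_one hne
      have hd' := (csF.isRightDescent_iff).1 hd
      have hneg := descent_neg w i hd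
      have hstep := invStep (φ w) i hneg
      have hih := ih (csF.length (w * csF.simple i)) (by omega) (w * csF.simple i) rfl
      rw [map_mul, φ_simple] at hih
      omega

lemma len_eq' (w : Wg) : csF.length w = Ninv (φ w) := len_eq _ w rfl

lemma eq_one_of_Ninv (w : Wg) (h : Ninv (φ w) = 0) : w = 1 :=
  csF.length_eq_zero_iff.1 (by rw [len_eq' w, h])

/-! Concrete data for the endgame -/

def ω0 : List (Fin 4) := [0,1,2,3, 0,1,2,3, 0,1,2,3, 0,1,2,3, 0,1,2,3, 0,1,2,3]
def ωU : List (Fin 4) := [1,2,3, 1,2,3, 1,2,3]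
def ωC : List (Fin 4) := [0,1,2,1,3,2,1]
def Umat : Mt := !![1,0,0,0; 3,-1,0,0; 4,0,-1,0; 2,0,0,-1]

lemma m0 : ((ω0.map SM).prod) = -1 := by decide
lemma mrev0 : ((ω0.reverse.map SM).prod) = -1 := by decide
lemma mU : ((ωU.map SM).prod) = Umat := by decide
lemma mrevU : ((ωU.reverse.map SM).prod) = Umat := by decide
lemma NinvM1 : Ninv (-1 : Mt) = 24 := by decide
lemma NU : Ninv Umat = 9 := by decide
lemma cardPU : (PR.filter (fun b => b 0 = 0)).card = 9 := by decide
lemma hUminus : ∀ b ∈ PR.filter (fun b => b 0 = 0), Umat.mulVec b = -b := by decide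
lemma bigZ : (((ωC ++ ω0 ++ [0] ++ ωC.reverse ++ ωU.reverse)).map SM).prod = 1 := by decide
lemma NinvOne : Ninv (1 : Mt) = 0 := by decide
lemma row0 : ∀ a : Fin 4, a ≠ 0 → (SM a) 0 = ![1,0,0,0] := by decide

lemma SM0coord (a : Fin 4) (ha : a ≠ 0) (vv : V) : ((SM a).mulVec vv) 0 = vv 0 := by
  show dotProduct (SM a 0) vv = vv 0
  rw [row0 a ha]
  simp [dotProduct, Fin.sum_univ_four]

abbrev Pcl : Subgroup Wg := Subgroup.closure
  {CoxeterMatrix.F₄.simple 1, CoxeterMatrix.F₄.simple 2, CoxeterMatrix.F₄.simple 3}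

lemma mem_closure_word : ∀ ω : List (Fin 4), (∀ x ∈ ω, x = 1 ∨ x = 2 ∨ x = 3) →
    csF.wordProd ω ∈ Pcl := by
  intro ω
  induction ω with
  | nil => intro _; rw [wordProd_nil]; exact one_mem _
  | cons x τ ih =>
    intro h
    rw [wordProd_cons]
    refine mul_mem ?_ (ih fun y hy => h y (List.mem_cons_of_mem _ hy))
    have hs : csF.simple x = CoxeterMatrix.F₄.simple x := by
      rw [CoxeterMatrix.toCoxeterSystem_simple]
    rcases h x (List.mem_cons_self (a := x) (l := τ)) with rfl | rfl | rfl <;>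
      (rw [hs]; exact Subgroup.subset_closure (by simp))

lemma coord0 (w : Wg) (hw : w ∈ Pcl) : ∀ vv : V, ((φ w).mulVec vv) 0 = vv 0 := by
  induction hw using Subgroup.closure_induction with
  | mem x hx =>
      intro vv
      have : ∃ a : Fin 4, a ≠ 0 ∧ x = CoxeterMatrix.F₄.simple a := by
        rcases hx with rfl | rfl | rfl
        · exact ⟨1, by decide, rfl⟩
        · exact ⟨2, by decide, rfl⟩
        · exact ⟨3, by decide, rfl⟩
      obtain ⟨a, ha, rfl⟩ := this
      rw [φ_simple']
      exact SM0coord a ha vv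
  | one => intro vv; rw [map_one, Matrix.one_mulVec]
  | mul x y hx hy px py =>
      intro vv
      rw [map_mul, ← Matrix.mulVec_mulVec]
      rw [px ((φ y).mulVec vv), py vv]
  | inv x hx px =>
      intro vv
      have h1 : (φ x).mulVec ((φ x⁻¹).mulVec vv) = vv := by
        rw [Matrix.mulVec_mulVec, ← map_mul, mul_inv_cancel, map_one, Matrix.one_mulVec]
      calc ((φ x⁻¹).mulVec vv) 0 = ((φ x).mulVec ((φ x⁻¹).mulVec vv)) 0 := (px _).symm
        _ = vv 0 := by rw [h1]

end Stmt17aux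

open Stmt17aux CoxeterSystem in
/-- In the Coxeter group `W` of type `F₄` (with simple reflections `s₁, s₂, s₃, s₄`, here
0-indexed as `s 0, …, s 3`; the bonds `1–2` and `3–4` have label 3 and the bond `2–3`
has label 4), let `u` be an element of the parabolic subgroup `P` generated by
`s₂, s₃, s₄` whose length is maximal among the lengths of elements of `P`.  Then
`w₀ · s₁` is conjugate in `W` to `u`, where `w₀` is an element of maximal Coxeter
length in `W`. -/
theorem stmt17 (w₀ : CoxeterMatrix.F₄.Group)
    (hw₀ : ∀ w : CoxeterMatrix.F₄.Group,
      CoxeterMatrix.F₄.toCoxeterSystem.length w ≤ CoxeterMatrix.F₄.toCoxeterSystem.length w₀)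
    (u : CoxeterMatrix.F₄.Group)
    (hu : u ∈ Subgroup.closure {CoxeterMatrix.F₄.simple 1, CoxeterMatrix.F₄.simple 2,
      CoxeterMatrix.F₄.simple 3})
    (humax : ∀ v ∈ Subgroup.closure {CoxeterMatrix.F₄.simple 1, CoxeterMatrix.F₄.simple 2,
        CoxeterMatrix.F₄.simple 3},
      CoxeterMatrix.F₄.toCoxeterSystem.length v ≤ CoxeterMatrix.F₄.toCoxeterSystem.length u) :
    IsConj (w₀ * CoxeterMatrix.F₄.simple 0) u := by
  -- Step 1 : identify w₀
  have hw0eq : w₀ = csF.wordProd ω0 := by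
    have h24 : csF.length (csF.wordProd ω0) = 24 := by
      rw [len_eq', φ_wordProd, m0, NinvM1]
    have hge : 24 ≤ csF.length w₀ := h24 ▸ hw₀ (csF.wordProd ω0)
    have hlew : Ninv (φ w₀) ≤ 24 := by
      have h := Finset.card_filter_le PR (fun b => -((φ w₀).mulVec b) ∈ PR)
      rwa [cardPR] at h
    have hN : Ninv (φ w₀) = 24 := by
      have := len_eq' w₀
      omega
    have hall : ∀ b ∈ PR, -((φ w₀).mulVec b) ∈ PR := by
      have hsub : PR.filter (fun b => -((φ w₀).mulVec b) ∈ PR) = PR := by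
        apply Finset.eq_of_subset_of_card_le (Finset.filter_subset _ _)
        rw [cardPR]
        exact le_of_eq hN.symm
      intro b hb
      rw [← hsub] at hb
      exact (Finset.mem_filter.1 hb).2
    have hφy : φ (w₀ * (csF.wordProd ω0)⁻¹) = φ w₀ * (-1) := by
      rw [map_mul]
      congr 1
      rw [← wordProd_reverse, φ_wordProd, mrev0]
    have hNy : Ninv (φ (w₀ * (csF.wordProd ω0)⁻¹)) = 0 := by
      rw [Ninv, Finset.card_eq_zero, Finset.filter_eq_empty_iff]
      intro b hb
      rw [hφy, mul_neg_one, Matrix.neg_mulVec, neg_neg]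
      have h2 := dC _ (hall b hb)
      rwa [neg_neg] at h2
    exact (mul_inv_eq_one.1 (eq_one_of_Ninv _ hNy)).symm ▸ rfl
  -- Step 2 : identify u
  have hUmem : csF.wordProd ωU ∈ Pcl := mem_closure_word ωU (by decide)
  have hueq : u = csF.wordProd ωU := by
    have h9 : csF.length (csF.wordProd ωU) = 9 := by
      rw [len_eq', φ_wordProd, mU, NU]
    have hge : 9 ≤ csF.length u := h9 ▸ humax _ hUmem
    have hsub : PR.filter (fun b => -((φ u).mulVec b) ∈ PR)
        ⊆ PR.filter (fun b => b 0 = 0) := by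
      intro b hb
      obtain ⟨hbPR, hbneg⟩ := Finset.mem_filter.1 hb
      refine Finset.mem_filter.2 ⟨hbPR, ?_⟩
      have h1 : ((φ u).mulVec b) 0 = b 0 := coord0 u hu b
      have h2 : 0 ≤ b 0 := dG b hbPR
      have h3 := dG _ hbneg
      simp only [Pi.neg_apply] at h3
      omega
    have hle9 : Ninv (φ u) ≤ 9 := by
      have h := Finset.card_le_card hsub
      rwa [cardPU] at h
    have hNu : Ninv (φ u) = 9 := by
      have := len_eq' u
      omega
    have hinvu : PR.filter (fun b => -((φ u).mulVec b) ∈ PR)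
        = PR.filter (fun b => b 0 = 0) :=
      Finset.eq_of_subset_of_card_le hsub (by rw [cardPU]; exact le_of_eq hNu.symm)
    have hxcl : u * (csF.wordProd ωU)⁻¹ ∈ Pcl := mul_mem hu (inv_mem hUmem)
    have hφx : φ (u * (csF.wordProd ωU)⁻¹) = φ u * Umat := by
      rw [map_mul]
      congr 1
      rw [← wordProd_reverse, φ_wordProd, mrevU]
    have hNx : Ninv (φ (u * (csF.wordProd ωU)⁻¹)) = 0 := by
      rw [Ninv, Finset.card_eq_zero, Finset.filter_eq_empty_iff]
      intro b hbPR
      by_cases hb0 : b 0 = 0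
      · have hbPU : b ∈ PR.filter (fun b => b 0 = 0) := Finset.mem_filter.2 ⟨hbPR, hb0⟩
        rw [hφx, ← Matrix.mulVec_mulVec, hUminus b hbPU, Matrix.mulVec_neg, neg_neg]
        have hbinv : b ∈ PR.filter (fun b => -((φ u).mulVec b) ∈ PR) := by
          rw [hinvu]
          exact hbPU
        have h2 := dC _ ((Finset.mem_filter.1 hbinv).2)
        rwa [neg_neg] at h2
      · intro hcontra
        have h3 := dG _ hcontra
        simp only [Pi.neg_apply] at h3
        have h1 : ((φ (u * (csF.wordProd ωU)⁻¹)).mulVec b) 0 = b 0 := coord0 _ hxcl b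
        have h2 : 0 ≤ b 0 := dG b hbPR
        omega
    exact (mul_inv_eq_one.1 (eq_one_of_Ninv _ hNx))
  -- Step 3 : the conjugation
  rw [hw0eq, hueq, isConj_iff]
  refine ⟨csF.wordProd ωC, ?_⟩
  have hzw : csF.wordProd ωC * (csF.wordProd ω0 * CoxeterMatrix.F₄.simple 0)
        * (csF.wordProd ωC)⁻¹ * (csF.wordProd ωU)⁻¹
      = csF.wordProd (ωC ++ ω0 ++ [0] ++ ωC.reverse ++ ωU.reverse) := by
    rw [wordProd_append, wordProd_append, wordProd_append, wordProd_append,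
      wordProd_reverse, wordProd_reverse, wordProd_singleton]
    have hs0 : csF.simple 0 = CoxeterMatrix.F₄.simple 0 := by
      rw [CoxeterMatrix.toCoxeterSystem_simple]
    rw [hs0]
    simp only [mul_assoc]
  have hz1 : csF.wordProd ωC * (csF.wordProd ω0 * CoxeterMatrix.F₄.simple 0)
      * (csF.wordProd ωC)⁻¹ * (csF.wordProd ωU)⁻¹ = 1 := by
    apply eq_one_of_Ninv
    rw [hzw, φ_wordProd, bigZ]
    exact NinvOne
  exact mul_inv_eq_one.1 hz1
end

section
/- In the Coxeter group W of type E₆, let Z be the centralizer of w₀ in W, and let u be an element of the parabolic subgroup P generated by s₁, s₃, s₄, s₅, s₆ whose length ℓ(u) is maximal among the lengths of elements of P. Then s₂ ∈ Z, u ∈ Z, and w₀ · s₂ is conjugate to u by an element of Z. -/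
namespace Stmt18E6
open Matrix CoxeterSystem CoxeterMatrix

abbrev V6 := Fin 6 → ℤ
abbrev M6 := Matrix (Fin 6) (Fin 6) ℤ
def S0m : M6 := !![-1,0,1,0,0,0; 0,1,0,0,0,0; 0,0,1,0,0,0; 0,0,0,1,0,0; 0,0,0,0,1,0; 0,0,0,0,0,1]
def S1m : M6 := !![1,0,0,0,0,0; 0,-1,0,1,0,0; 0,0,1,0,0,0; 0,0,0,1,0,0; 0,0,0,0,1,0; 0,0,0,0,0,1]
def S2m : M6 := !![1,0,0,0,0,0; 0,1,0,0,0,0; 1,0,-1,1,0,0; 0,0,0,1,0,0; 0,0,0,0,1,0; 0,0,0,0,0,1]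
def S3m : M6 := !![1,0,0,0,0,0; 0,1,0,0,0,0; 0,0,1,0,0,0; 0,1,1,-1,1,0; 0,0,0,0,1,0; 0,0,0,0,0,1]
def S4m : M6 := !![1,0,0,0,0,0; 0,1,0,0,0,0; 0,0,1,0,0,0; 0,0,0,1,0,0; 0,0,0,1,-1,1; 0,0,0,0,0,1]
def S5m : M6 := !![1,0,0,0,0,0; 0,1,0,0,0,0; 0,0,1,0,0,0; 0,0,0,1,0,0; 0,0,0,0,1,0; 0,0,0,0,1,-1]
def Sg : Fin 6 → M6 := ![S0m,S1m,S2m,S3m,S4m,S5m]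
def al : Fin 6 → V6 := ![![1,0,0,0,0,0],![0,1,0,0,0,0],![0,0,1,0,0,0],![0,0,0,1,0,0],![0,0,0,0,1,0],![0,0,0,0,0,1]]
def PosL : List V6 := [![0,0,0,0,0,1], ![0,0,0,0,1,0], ![0,0,0,0,1,1], ![0,0,0,1,0,0], ![0,0,0,1,1,0], ![0,0,0,1,1,1], ![0,0,1,0,0,0], ![0,0,1,1,0,0], ![0,0,1,1,1,0], ![0,0,1,1,1,1], ![0,1,0,0,0,0], ![0,1,0,1,0,0], ![0,1,0,1,1,0], ![0,1,0,1,1,1], ![0,1,1,1,0,0], ![0,1,1,1,1,0], ![0,1,1,1,1,1], ![0,1,1,2,1,0], ![0,1,1,2,1,1], ![0,1,1,2,2,1], ![1,0,0,0,0,0], ![1,0,1,0,0,0], ![1,0,1,1,0,0], ![1,0,1,1,1,0], ![1,0,1,1,1,1], ![1,1,1,1,0,0], ![1,1,1,1,1,0], ![1,1,1,1,1,1], ![1,1,1,2,1,0], ![1,1,1,2,1,1], ![1,1,1,2,2,1], ![1,1,2,2,1,0], ![1,1,2,2,1,1], ![1,1,2,2,2,1], ![1,1,2,3,2,1], ![1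,2,2,3,2,1]]
def PhiL : List V6 := [![-1,-2,-2,-3,-2,-1], ![-1,-1,-2,-3,-2,-1], ![-1,-1,-2,-2,-2,-1], ![-1,-1,-2,-2,-1,-1], ![-1,-1,-2,-2,-1,0], ![-1,-1,-1,-2,-2,-1], ![-1,-1,-1,-2,-1,-1], ![-1,-1,-1,-2,-1,0], ![-1,-1,-1,-1,-1,-1], ![-1,-1,-1,-1,-1,0], ![-1,-1,-1,-1,0,0], ![-1,0,-1,-1,-1,-1], ![-1,0,-1,-1,-1,0], ![-1,0,-1,-1,0,0], ![-1,0,-1,0,0,0], ![-1,0,0,0,0,0], ![0,-1,-1,-2,-2,-1], ![0,-1,-1,-2,-1,-1], ![0,-1,-1,-2,-1,0], ![0,-1,-1,-1,-1,-1], ![0,-1,-1,-1,-1,0], ![0,-1,-1,-1,0,0], ![0,-1,0,-1,-1,-1], ![0,-1,0,-1,-1,0], ![0,-1,0,-1,0,0], ![0,-1,0,0,0,0], ![0,0,-1,-1,-1,-1], ![0,0,-1,-1,-1,0], ![0,0,-1,-1,0,0], ![0,0,-1,0,0,0], ![0,0,0,-1,-1,-1], ![0,0,0,-1,-1,0], ![0,0,0,-1,0,0],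 ![0,0,0,0,-1,-1], ![0,0,0,0,-1,0], ![0,0,0,0,0,-1], ![0,0,0,0,0,1], ![0,0,0,0,1,0], ![0,0,0,0,1,1], ![0,0,0,1,0,0], ![0,0,0,1,1,0], ![0,0,0,1,1,1], ![0,0,1,0,0,0], ![0,0,1,1,0,0], ![0,0,1,1,1,0], ![0,0,1,1,1,1], ![0,1,0,0,0,0], ![0,1,0,1,0,0], ![0,1,0,1,1,0], ![0,1,0,1,1,1], ![0,1,1,1,0,0], ![0,1,1,1,1,0], ![0,1,1,1,1,1], ![0,1,1,2,1,0], ![0,1,1,2,1,1], ![0,1,1,2,2,1], ![1,0,0,0,0,0], ![1,0,1,0,0,0], ![1,0,1,1,0,0], ![1,0,1,1,1,0], ![1,0,1,1,1,1], ![1,1,1,1,0,0], ![1,1,1,1,1,0], ![1,1,1,1,1,1], ![1,1,1,2,1,0], ![1,1,1,2,1,1], ![1,1,1,2,2,1], ![1,1,2,2,1,0], ![1,1,2,2,1,1], ![1,1,2,2,2,1], ![1,1,2,3,2,1], ![1,2,2,3,2,1]]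
def w0w : List (Fin 6) := [0,1,2,0,3,1,2,0,3,2,4,3,1,2,0,3,2,4,3,1,5,4,3,1,2,0,3,2,4,3,1,5,4,3,2,0]
def u0w : List (Fin 6) := [0,2,0,3,2,0,4,3,2,0,5,4,3,2,0]
def g0w : List (Fin 6) := [1,3,2,0,4,3,2,5,4,3]
def W0m : M6 := !![0,0,0,0,0,-1; 0,-1,0,0,0,0; 0,0,0,0,-1,0; 0,0,0,-1,0,0; 0,0,-1,0,0,0; -1,0,0,0,0,0]
def U0m : M6 := !![0,1,0,0,0,-1; 0,1,0,0,0,0; 0,2,0,0,-1,0; 0,3,0,-1,0,0; 0,2,-1,0,0,0; -1,1,0,0,0,0]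
def G0m : M6 := !![0,1,0,-1,1,0; 0,2,0,-1,0,0; 0,2,0,-1,0,1; 0,3,0,-1,0,0; 1,2,0,-1,0,0; 0,1,1,-1,0,0]
def W0mi : M6 := !![0,0,0,0,0,-1; 0,-1,0,0,0,0; 0,0,0,0,-1,0; 0,0,0,-1,0,0; 0,0,-1,0,0,0; -1,0,0,0,0,0]
def U0mi : M6 := !![0,1,0,0,0,-1; 0,1,0,0,0,0; 0,2,0,0,-1,0; 0,3,0,-1,0,0; 0,2,-1,0,0,0; -1,1,0,0,0,0]

def mv (A : M6) (v : V6) : V6 := fun i =>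
  A i 0 * v 0 + A i 1 * v 1 + A i 2 * v 2 + A i 3 * v 3 + A i 4 * v 4 + A i 5 * v 5

def nng (v : V6) : Prop := ∀ k, 0 ≤ v k

instance : DecidablePred nng := fun v => by unfold nng; infer_instance

theorem mv_eq (A : M6) (v : V6) : mv A v = A *ᵥ v := by
  funext k
  rw [mulVec, dotProduct, Fin.sum_univ_six]
  rfl

theorem mv_mul (A B : M6) (v : V6) : mv (A * B) v = mv A (mv B v) := by
  rw [mv_eq, mv_eq, mv_eq, mulVec_mulVec]

theorem mv_one (v : V6) : mv 1 v = v := by rw [mv_eq, one_mulVec]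

theorem mv_neg (A : M6) (v : V6) : mv A (-v) = -(mv A v) := by
  rw [mv_eq, mv_eq, mulVec_neg]

theorem mv_add (A : M6) (v w : V6) : mv A (v + w) = mv A v + mv A w := by
  rw [mv_eq, mv_eq, mv_eq, mulVec_add]

def PosF : Finset V6 := PosL.toFinset
def InF : Finset V6 := PosF.filter (fun v => v 1 = 0)

/-! ### Decidable facts -/

set_option maxRecDepth 100000

section Decides
set_option maxHeartbeats 4000000

theorem lift1 : CoxeterMatrix.IsLiftable CoxeterMatrix.E₆ Sg := by
  unfold CoxeterMatrix.IsLiftable; decide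

theorem sg_invol : ∀ i, Sg i * Sg i = 1 := by decide

theorem phiclosed : ∀ i : Fin 6, ∀ v ∈ PhiL, mv (Sg i) v ∈ PhiL := by decide

theorem al_mem_pos : ∀ i, al i ∈ PosL := by decide

theorem pos_sub_phi : ∀ v ∈ PosL, v ∈ PhiL := by decide

theorem pos_nng : ∀ v ∈ PosL, nng v := by decide

theorem al_nng : ∀ i, nng (al i) := by decide

theorem neg_al_not_pos : ∀ i, -(al i) ∉ PosL := by decide

theorem phi_dichot : ∀ v ∈ PhiL, ¬ nng v → -v ∈ PosL := by decide

theorem phi_not_both : ∀ v ∈ PhiL, ¬(nng v ∧ nng (-v)) := by decide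

theorem sg_al : ∀ i, mv (Sg i) (al i) = -(al i) := by decide

theorem sg_pos : ∀ i : Fin 6, ∀ v ∈ PosL, v ≠ al i → mv (Sg i) v ∈ PosL := by decide

theorem pair23 : ∀ i j : Fin 6, i ≠ j →
    (CoxeterMatrix.E₆ i j = 2 ∨ CoxeterMatrix.E₆ i j = 3) := by
  intro i j; fin_cases i <;> fin_cases j <;> decide

theorem pair2_fix : ∀ i j : Fin 6, CoxeterMatrix.E₆ i j = 2 → mv (Sg j) (al i) = al i := by
  intro i j; fin_cases i <;> fin_cases j <;> decide

theorem pair3_sum : ∀ i j : Fin 6, i ≠ j → CoxeterMatrix.E₆ i j = 3 →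
    mv (Sg j) (al i) = al i + al j := by
  intro i j; fin_cases i <;> fin_cases j <;> decide

theorem pair3_swap : ∀ i j : Fin 6, i ≠ j → CoxeterMatrix.E₆ i j = 3 →
    mv (Sg i) (mv (Sg j) (al i)) = al j := by
  intro i j; fin_cases i <;> fin_cases j <;> decide

theorem poscard : PosF.card = 36 := by decide

theorem w0prod : (w0w.map Sg).prod = W0m := by decide

theorem w0iprod : (w0w.reverse.map Sg).prod = W0mi := by decide

theorem u0prod : (u0w.map Sg).prod = U0m := by decide

theorem u0iprod : (u0w.reverse.map Sg).prod = U0mi := by decide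

theorem g0prod : (g0w.map Sg).prod = G0m := by decide

theorem w0_allneg : ∀ v ∈ PosL, ¬ nng (mv W0m v) := by decide

theorem w0i_negpos : ∀ v ∈ PosL, nng (-(mv W0mi v)) := by decide

theorem u0_inv_iff : ∀ v ∈ PosL, (¬ nng (mv U0m v) ↔ v 1 = 0) := by decide

theorem u0i_negpos : ∀ v ∈ PosL, v 1 = 0 → nng (-(mv U0mi v)) := by decide

theorem incard : InF.card = 15 := by decide

theorem outgen : ∀ i : Fin 6, i ≠ 1 → ∀ v ∈ PosL, 1 ≤ v 1 →
    (mv (Sg i) v ∈ PosL ∧ 1 ≤ mv (Sg i) v 1) := by decide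

theorem u0w_letters : ∀ i ∈ u0w, i = 0 ∨ i = 2 ∨ i = 3 ∨ i = 4 ∨ i = 5 := by decide

theorem comm_mats : S1m * W0m = W0m * S1m ∧ U0m * W0m = W0m * U0m ∧
    G0m * W0m = W0m * G0m ∧ G0m * (W0m * S1m) = U0m * G0m := by
  refine ⟨by decide, by decide, by decide, by decide⟩

end Decides

theorem row1_fix : ∀ i : Fin 6, i ≠ 1 → ∀ v : V6, mv (Sg i) v 1 = v 1 := by
  intro i hi v
  fin_cases i
  · show (0:ℤ) * v 0 + 1 * v 1 + 0 * v 2 + 0 * v 3 + 0 * v 4 + 0 * v 5 = v 1; ring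
  · exact absurd rfl hi
  · show (0:ℤ) * v 0 + 1 * v 1 + 0 * v 2 + 0 * v 3 + 0 * v 4 + 0 * v 5 = v 1; ring
  · show (0:ℤ) * v 0 + 1 * v 1 + 0 * v 2 + 0 * v 3 + 0 * v 4 + 0 * v 5 = v 1; ring
  · show (0:ℤ) * v 0 + 1 * v 1 + 0 * v 2 + 0 * v 3 + 0 * v 4 + 0 * v 5 = v 1; ring
  · show (0:ℤ) * v 0 + 1 * v 1 + 0 * v 2 + 0 * v 3 + 0 * v 4 + 0 * v 5 = v 1; ring

/-! ### The representation -/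

abbrev Wg := CoxeterMatrix.E₆.Group

abbrev cs : CoxeterSystem CoxeterMatrix.E₆ Wg := CoxeterMatrix.E₆.toCoxeterSystem

local prefix:100 "ℓ" => cs.length
local prefix:100 "σ" => cs.simple
local prefix:100 "π" => cs.wordProd

noncomputable def ρ : Wg →* M6 := cs.lift ⟨Sg, lift1⟩

theorem rho_simple (i : Fin 6) : ρ (σ i) = Sg i := cs.lift_apply_simple lift1 i

theorem rho_word (ω : List (Fin 6)) : ρ (π ω) = (ω.map Sg).prod := by
  induction ω with
  | nil => simp [cs.wordProd_nil]
  | cons i ω ih => rw [cs.wordProd_cons, _root_.map_mul, rho_simple, List.map_cons, List.prod_cons, ih]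

theorem rho_phi (w : Wg) : ∀ v ∈ PhiL, mv (ρ w) v ∈ PhiL := by
  obtain ⟨ω, rfl⟩ := cs.wordProd_surjective w
  induction ω with
  | nil => intro v hv; rw [cs.wordProd_nil, _root_.map_one, mv_one]; exact hv
  | cons i ω ih =>
      intro v hv
      rw [cs.wordProd_cons, _root_.map_mul, rho_simple, mv_mul]
      exact phiclosed i _ (ih v hv)

/-! ### Inversion counting -/

noncomputable def invn (g : M6) : ℕ := (PosF.filter (fun v => ¬ nng (mv g v))).card

theorem filter_split (g : M6) (i : Fin 6) :
    invn g = ((PosF.erase (al i)).filter (fun v => ¬ nng (mv g v))).card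
      + (if ¬ nng (mv g (al i)) then 1 else 0) := by
  unfold invn
  have hmem : al i ∈ PosF := List.mem_toFinset.mpr (al_mem_pos i)
  conv_lhs => rw [← Finset.insert_erase hmem]
  rw [Finset.filter_insert]
  by_cases h : ¬ nng (mv g (al i))
  · rw [if_pos h, Finset.card_insert_of_notMem (fun hc => Finset.notMem_erase (al i) PosF
      (Finset.mem_of_mem_filter _ hc)), if_pos h]
  · rw [if_neg h, if_neg h, add_zero]

theorem sg_invol_mv (i : Fin 6) (v : V6) : mv (Sg i) (mv (Sg i) v) = v := by
  rw [← mv_mul, sg_invol, mv_one]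

theorem erase_bij (g : M6) (i : Fin 6) :
    ((PosF.erase (al i)).filter (fun v => ¬ nng (mv g (mv (Sg i) v)))).card
      = ((PosF.erase (al i)).filter (fun v => ¬ nng (mv g v))).card := by
  have hmaps : ∀ v, v ∈ PosF.erase (al i) → mv (Sg i) v ∈ PosF.erase (al i) := by
    intro v hv
    have hvP : v ∈ PosL := List.mem_toFinset.mp (Finset.mem_of_mem_erase hv)
    have hvne : v ≠ al i := Finset.ne_of_mem_erase hv
    have h1 : mv (Sg i) v ∈ PosL := sg_pos i v hvP hvne
    refine Finset.mem_erase.mpr ⟨?_, List.mem_toFinset.mpr h1⟩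
    intro hc
    have : v = mv (Sg i) (al i) := by rw [← hc, sg_invol_mv]
    rw [sg_al] at this
    exact neg_al_not_pos i (this ▸ hvP)
  refine Finset.card_bij' (fun v _ => mv (Sg i) v) (fun v _ => mv (Sg i) v) ?_ ?_ ?_ ?_
  · intro v hv
    simp only [Finset.mem_filter] at hv ⊢
    exact ⟨hmaps v hv.1, hv.2⟩
  · intro v hv
    simp only [Finset.mem_filter] at hv ⊢
    exact ⟨hmaps v hv.1, by rw [sg_invol_mv]; exact hv.2⟩
  · intro v _
    exact sg_invol_mv i v
  · intro v _
    exact sg_invol_mv i v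

theorem step_core (g : M6) (hg : ∀ v ∈ PhiL, mv g v ∈ PhiL) (i : Fin 6) :
    (nng (mv g (al i)) → invn (g * Sg i) = invn g + 1) ∧
    (¬ nng (mv g (al i)) → invn g = invn (g * Sg i) + 1) := by
  have hsplit1 := filter_split (g * Sg i) i
  have hsplit2 := filter_split g i
  have hcong : ((PosF.erase (al i)).filter (fun v => ¬ nng (mv (g * Sg i) v))).card
      = ((PosF.erase (al i)).filter (fun v => ¬ nng (mv g v))).card := by
    rw [← erase_bij g i]
    congr 1
    apply Finset.filter_congr
    intro v _
    rw [mv_mul]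
  have hβ : mv g (al i) ∈ PhiL := hg (al i) (pos_sub_phi _ (al_mem_pos i))
  have hval : mv (g * Sg i) (al i) = -(mv g (al i)) := by
    rw [mv_mul, sg_al, mv_neg]
  constructor
  · intro hpos
    have h1 : ¬ nng (mv (g * Sg i) (al i)) := by
      rw [hval]
      intro hneg
      exact phi_not_both _ hβ ⟨hpos, hneg⟩
    rw [hsplit1, hsplit2, hcong, if_pos h1, if_neg (not_not_intro hpos)]
  · intro hneg
    have h1 : nng (mv (g * Sg i) (al i)) := by
      rw [hval]
      have := phi_dichot _ hβ hneg
      exact pos_nng _ this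
    rw [hsplit1, hsplit2, hcong, if_neg (not_not_intro h1), if_pos hneg]

theorem stepPos (w : Wg) (i : Fin 6) (h : nng (mv (ρ w) (al i))) :
    invn (ρ (w * σ i)) = invn (ρ w) + 1 := by
  rw [_root_.map_mul, rho_simple]
  exact (step_core (ρ w) (rho_phi w) i).1 h

theorem stepNeg (w : Wg) (i : Fin 6) (h : ¬ nng (mv (ρ w) (al i))) :
    invn (ρ w) = invn (ρ (w * σ i)) + 1 := by
  rw [_root_.map_mul, rho_simple]
  exact (step_core (ρ w) (rho_phi w) i).2 h

theorem invn_word_le (ω : List (Fin 6)) : invn (ρ (π ω)) ≤ ω.length := by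
  induction ω using List.reverseRecOn with
  | nil => rw [cs.wordProd_nil]; rw [_root_.map_one]
           have : invn (1 : M6) = 0 := by
             unfold invn
             rw [Finset.card_eq_zero, Finset.filter_eq_empty_iff]
             intro v hv
             rw [mv_one, not_not]
             exact pos_nng v (List.mem_toFinset.mp hv)
           simp [this]
  | append_singleton ω i ih =>
      rw [cs.wordProd_append, cs.wordProd_singleton]
      by_cases h : nng (mv (ρ (π ω)) (al i))
      · have := stepPos (π ω) i h
        simp only [List.length_append, List.length_singleton]
        omega
      · have := stepNeg (π ω) i h
        simp only [List.length_append, List.length_singleton]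
        omega

theorem invn_le_length (w : Wg) : invn (ρ w) ≤ ℓ w := by
  obtain ⟨ω, hlen, rfl⟩ := cs.exists_reduced_word w
  calc invn (ρ (π ω)) ≤ ω.length := invn_word_le ω
  _ = _ := (hlen : ℓ (π ω) = ω.length).symm

/-! ### Group helpers -/

theorem comm_of_sq {G : Type*} [Group G] {x y : G} (hx : x * x = 1) (hy : y * y = 1)
    (h : (x * y) ^ 2 = 1) : x * y = y * x := by
  have h' : (x * y) * (x * y) = 1 := by rw [← pow_two]; exact h
  have hinv : (x * y)⁻¹ = x * y := inv_eq_of_mul_eq_one_right h'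
  calc x * y = (x * y)⁻¹ := hinv.symm
  _ = y⁻¹ * x⁻¹ := mul_inv_rev x y
  _ = y * x := by rw [inv_eq_of_mul_eq_one_right hx, inv_eq_of_mul_eq_one_right hy]

theorem braid_of_cube {G : Type*} [Group G] {x y : G} (hx : x * x = 1) (hy : y * y = 1)
    (h : (x * y) ^ 3 = 1) : x * y * x = y * x * y := by
  have hxin : x⁻¹ = x := inv_eq_of_mul_eq_one_right hx
  have hyin : y⁻¹ = y := inv_eq_of_mul_eq_one_right hy
  have h2 : (x * y) * (x * y) = (x * y)⁻¹ := by
    have h3 : ((x*y)*(x*y))*(x*y) = 1 := by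
      rw [← pow_two, ← pow_succ]
      exact h
    exact eq_inv_of_mul_eq_one_left h3
  calc x * y * x = ((x*y)*(x*y)) * y⁻¹ := by group
  _ = (x * y)⁻¹ * y⁻¹ := by rw [h2]
  _ = y⁻¹ * x⁻¹ * y⁻¹ := by rw [_root_.mul_inv_rev]
  _ = y * x * y := by rw [hxin, hyin]

theorem simple_comm {i j : Fin 6} (h2 : CoxeterMatrix.E₆ i j = 2) : σ i * σ j = σ j * σ i := by
  apply comm_of_sq (cs.simple_mul_simple_self i) (cs.simple_mul_simple_self j)
  have := cs.simple_mul_simple_pow i j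
  rwa [h2] at this

theorem simple_braid {i j : Fin 6} (h3 : CoxeterMatrix.E₆ i j = 3) :
    σ i * σ j * σ i = σ j * σ i * σ j := by
  apply braid_of_cube (cs.simple_mul_simple_self i) (cs.simple_mul_simple_self j)
  have := cs.simple_mul_simple_pow i j
  rwa [h3] at this

/-! ### The key positivity lemma -/

theorem key : ∀ N : ℕ, ∀ w : Wg, ∀ i : Fin 6, ℓ w = N → ℓ (w * σ i) = N + 1 →
    nng (mv (ρ w) (al i)) := by
  intro N
  induction N using Nat.strong_induction_on with
  | _ N IH =>
    intro w i hw hasc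
    rcases Nat.eq_zero_or_pos N with hN | hN
    · subst hN
      have : w = 1 := cs.length_eq_zero_iff.mp hw
      subst this
      rw [_root_.map_one, mv_one]
      exact al_nng i
    · have hwne : w ≠ 1 := by
        intro hc; rw [hc, cs.length_one] at hw; omega
      obtain ⟨j, hj⟩ := cs.exists_rightDescent_of_ne_one hwne
      have hdj : ℓ (w * σ j) + 1 = N := by
        rcases cs.length_mul_simple w j with h | h
        · exfalso; unfold CoxeterSystem.IsRightDescent at hj; omega
        · omega
      have hij : j ≠ i := by
        intro hc; subst hc
        unfold CoxeterSystem.IsRightDescent at hj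
        omega
      set v := w * σ j with hv
      have hvw : v * σ j = w := cs.simple_mul_simple_cancel_right j
      have hρw : ρ w = ρ v * Sg j := by
        rw [← hvw, _root_.map_mul, rho_simple]
      have hlv : ℓ v = N - 1 := by omega
      rcases pair23 i j (Ne.symm hij) with hm | hm
      · -- commuting case
        have hcomm : σ i * σ j = σ j * σ i := simple_comm hm
        have hkey : v * σ i = (w * σ i) * σ j := by
          rw [hv, mul_assoc, mul_assoc, hcomm]
        have hlvi : ℓ (v * σ i) = (N - 1) + 1 := by
          rcases cs.length_mul_simple v i with h | h
          · omega
          · exfalso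
            rcases cs.length_mul_simple (w * σ i) j with h' | h'
            · rw [← hkey] at h'; omega
            · rw [← hkey] at h'; omega
        have hpos := IH (N-1) (by omega) v i hlv hlvi
        rw [hρw, mv_mul, pair2_fix i j hm]
        exact hpos
      · -- braid case
        rcases cs.length_mul_simple v i with hvi | hvi
        · -- ℓ(v σi) = N
          have hvi' : ℓ (v * σ i) = (N-1) + 1 := by omega
          have hpi := IH (N-1) (by omega) v i hlv hvi'
          have hvj : ℓ (v * σ j) = (N - 1) + 1 := by rw [hvw, hw]; omega
          have hpj := IH (N-1) (by omega) v j hlv hvj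
          rw [hρw, mv_mul, pair3_sum i j (Ne.symm hij) hm, mv_add]
          intro k
          exact add_nonneg (hpi k) (hpj k)
        · -- ℓ(v σi) = N - 2
          set v2 := v * σ i with hv2def
          have hlv2 : ℓ v2 = N - 2 := by omega
          have hv2v : v2 * σ i = v := by rw [hv2def]; exact cs.simple_mul_simple_cancel_right i
          have hkey2 : v2 * σ j = ((w * σ i) * σ j) * σ i := by
            have h1 : σ j * (σ i * σ j) = σ i * (σ j * σ i) := by
              have := simple_braid hm
              rw [← mul_assoc, ← mul_assoc, this]
            calc v2 * σ j = w * (σ j * (σ i * σ j)) := by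
                  rw [hv2def, hv]; group
            _ = w * (σ i * (σ j * σ i)) := by rw [h1]
            _ = ((w * σ i) * σ j) * σ i := by group
          have hlen2 : ℓ (v2 * σ j) = (N - 2) + 1 := by
            have hub : ℓ (v2 * σ j) + 1 = N - 2 ∨ ℓ (v2 * σ j) = (N-2) + 1 := by
              rcases cs.length_mul_simple v2 j with h | h
              · right; omega
              · left; omega
            rcases hub with h | h
            · exfalso
              -- length of ((w σi) σj) σi ≥ N - 1
              have e1 : ℓ (w * σ i) = N + 1 := hasc
              have e2 : ℓ ((w * σ i) * σ j) ≥ N := by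
                rcases cs.length_mul_simple (w * σ i) j with h' | h'
                · omega
                · omega
              have e3 : ℓ (((w * σ i) * σ j) * σ i) ≥ N - 1 := by
                rcases cs.length_mul_simple ((w * σ i) * σ j) i with h' | h'
                · omega
                · omega
              rw [← hkey2] at e3
              omega
            · exact h
          have hpj := IH (N-2) (by omega) v2 j hlv2 hlen2
          have hρw2 : ρ w = ρ v2 * Sg i * Sg j := by
            rw [← hvw, ← hv2v, _root_.map_mul, _root_.map_mul, rho_simple, rho_simple]
          rw [hρw2, mul_assoc, mv_mul, mv_mul, pair3_swap i j (Ne.symm hij) hm]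
          exact hpj

theorem not_nng_of_descent (w : Wg) (j : Fin 6) (hdes : ℓ (w * σ j) + 1 = ℓ w) :
    ¬ nng (mv (ρ w) (al j)) := by
  intro hpos
  have hasc : ℓ ((w * σ j) * σ j) = ℓ (w * σ j) + 1 := by
    rw [cs.simple_mul_simple_cancel_right]; omega
  have := key (ℓ (w * σ j)) (w * σ j) j rfl hasc
  rw [_root_.map_mul, rho_simple, mv_mul, sg_al, mv_neg] at this
  have hβ : mv (ρ w) (al j) ∈ PhiL := rho_phi w (al j) (pos_sub_phi _ (al_mem_pos j))
  exact phi_not_both _ hβ ⟨hpos, this⟩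

theorem length_eq_invn : ∀ N : ℕ, ∀ w : Wg, ℓ w = N → invn (ρ w) = N := by
  intro N
  induction N using Nat.strong_induction_on with
  | _ N IH =>
    intro w hw
    rcases Nat.eq_zero_or_pos N with hN | hN
    · subst hN
      have : w = 1 := cs.length_eq_zero_iff.mp hw
      subst this
      rw [_root_.map_one]
      unfold invn
      rw [Finset.card_eq_zero, Finset.filter_eq_empty_iff]
      intro v hv
      rw [mv_one, not_not]
      exact pos_nng v (List.mem_toFinset.mp hv)
    · have hwne : w ≠ 1 := by
        intro hc; rw [hc, cs.length_one] at hw; omega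
      obtain ⟨j, hj⟩ := cs.exists_rightDescent_of_ne_one hwne
      have hdj : ℓ (w * σ j) + 1 = N := by
        rcases cs.length_mul_simple w j with h | h
        · exfalso; unfold CoxeterSystem.IsRightDescent at hj; omega
        · omega
      have hneg := not_nng_of_descent w j (by omega)
      have hstep := stepNeg w j hneg
      have hIH := IH (N-1) (by omega) (w * σ j) (by omega)
      omega

theorem length_invn (w : Wg) : ℓ w = invn (ρ w) := (length_eq_invn (ℓ w) w rfl).symm

theorem rho_inj {a b : Wg} (h : ρ a = ρ b) : a = b := by
  have h1 : ρ (a⁻¹ * b) = 1 := by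
    rw [_root_.map_mul, ← h, ← _root_.map_mul, inv_mul_cancel, _root_.map_one]
  have h2 : ℓ (a⁻¹ * b) = 0 := by
    rw [length_invn, h1]
    unfold invn
    rw [Finset.card_eq_zero, Finset.filter_eq_empty_iff]
    intro v hv
    rw [mv_one, not_not]
    exact pos_nng v (List.mem_toFinset.mp hv)
  have h3 := cs.length_eq_zero_iff.mp h2
  rw [inv_mul_eq_one] at h3
  exact h3

/-! ### Endgame -/

theorem invn_zero_imp_one (w : Wg) (h : ∀ v ∈ PosF, nng (mv (ρ w) v)) : w = 1 := by
  have h2 : ℓ w = 0 := by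
    rw [length_invn]
    unfold invn
    rw [Finset.card_eq_zero, Finset.filter_eq_empty_iff]
    intro v hv
    rw [not_not]
    exact h v hv
  exact cs.length_eq_zero_iff.mp h2

theorem rho_W0 : ρ (π w0w) = W0m := by rw [rho_word, w0prod]
theorem rho_U0 : ρ (π u0w) = U0m := by rw [rho_word, u0prod]
theorem rho_G0 : ρ (π g0w) = G0m := by rw [rho_word, g0prod]
theorem rho_W0i : ρ ((π w0w)⁻¹) = W0mi := by
  rw [← cs.wordProd_reverse, rho_word, w0iprod]
theorem rho_U0i : ρ ((π u0w)⁻¹) = U0mi := by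
  rw [← cs.wordProd_reverse, rho_word, u0iprod]

theorem length_W0 : ℓ (π w0w) = 36 := by
  rw [length_invn, rho_W0]
  unfold invn
  have hmem : ∀ v ∈ PosF, ¬ nng (mv W0m v) := fun v hv => w0_allneg v (List.mem_toFinset.mp hv)
  rw [Finset.filter_true_of_mem hmem]
  exact poscard

theorem w0_unique (w₀ : Wg) (hw₀ : ∀ w : Wg, ℓ w ≤ ℓ w₀) : w₀ = π w0w := by
  have hge : 36 ≤ ℓ w₀ := length_W0 ▸ hw₀ (π w0w)
  have hle : invn (ρ w₀) ≤ 36 := by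
    unfold invn
    calc (PosF.filter (fun v => ¬ nng (mv (ρ w₀) v))).card ≤ PosF.card :=
          Finset.card_filter_le _ _
    _ = 36 := poscard
  have heq : invn (ρ w₀) = 36 := by
    have := length_invn w₀
    omega
  have hall : ∀ v ∈ PosF, ¬ nng (mv (ρ w₀) v) := by
    unfold invn at heq
    have hfil : PosF.filter (fun v => ¬ nng (mv (ρ w₀) v)) = PosF := by
      apply Finset.eq_of_subset_of_card_le (Finset.filter_subset _ _)
      rw [heq, poscard]
    intro v hv
    have hv2 : v ∈ PosF.filter (fun v => ¬ nng (mv (ρ w₀) v)) := by rw [hfil]; exact hv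
    exact (Finset.mem_filter.mp hv2).2
  have hx1 : (π w0w)⁻¹ * w₀ = 1 := by
    apply invn_zero_imp_one
    intro v hv
    have hβmem : mv (ρ w₀) v ∈ PhiL := rho_phi _ _ (pos_sub_phi _ (List.mem_toFinset.mp hv))
    have hγ : -(mv (ρ w₀) v) ∈ PosL := phi_dichot _ hβmem (hall v hv)
    have hrw : mv (ρ ((π w0w)⁻¹ * w₀)) v = -(mv W0mi (-(mv (ρ w₀) v))) := by
      rw [_root_.map_mul, mv_mul, rho_W0i, mv_neg, neg_neg]
    rw [hrw]
    exact w0i_negpos _ hγ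
  rw [inv_mul_eq_one] at hx1
  exact hx1.symm

/-! ### The parabolic subgroup -/

def Pset : Set Wg := {σ 0, σ 2, σ 3, σ 4, σ 5}

def PProps (w : Wg) : Prop :=
  (∀ v ∈ PosL, 1 ≤ v 1 → (mv (ρ w) v ∈ PosL ∧ 1 ≤ mv (ρ w) v 1)) ∧
  (∀ v : V6, mv (ρ w) v 1 = v 1)

theorem pprops_gen (i : Fin 6) (hi : i ≠ 1) : PProps (σ i) := by
  constructor
  · intro v hv h1
    rw [rho_simple]
    exact outgen i hi v hv h1
  · intro v
    rw [rho_simple]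
    exact row1_fix i hi v

theorem pprops_mul {x y : Wg} (hx : PProps x) (hy : PProps y) : PProps (x * y) := by
  constructor
  · intro v hv h1
    rw [_root_.map_mul, mv_mul]
    obtain ⟨hy1, hy2⟩ := hy.1 v hv h1
    exact hx.1 _ hy1 hy2
  · intro v
    rw [_root_.map_mul, mv_mul]
    rw [hx.2, hy.2]

theorem pprops_closure {w : Wg} (hw : w ∈ Subgroup.closure Pset) :
    PProps w ∧ PProps w⁻¹ := by
  refine Subgroup.closure_induction ?_ ?_ ?_ ?_ hw
  · intro x hx
    have : ∃ i : Fin 6, i ≠ 1 ∧ x = σ i := by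
      simp only [Pset, Set.mem_insert_iff, Set.mem_singleton_iff] at hx
      rcases hx with h | h | h | h | h
      · exact ⟨0, by decide, h⟩
      · exact ⟨2, by decide, h⟩
      · exact ⟨3, by decide, h⟩
      · exact ⟨4, by decide, h⟩
      · exact ⟨5, by decide, h⟩
    obtain ⟨i, hi, rfl⟩ := this
    have hp := pprops_gen i hi
    refine ⟨hp, ?_⟩
    rw [cs.inv_simple]
    exact hp
  · have hP1 : PProps (1 : Wg) := by
      constructor
      · intro v hv h1
        rw [_root_.map_one, mv_one]
        exact ⟨hv, h1⟩
      · intro v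
        rw [_root_.map_one, mv_one]
    exact ⟨hP1, by rw [inv_one]; exact hP1⟩
  · intro x y _ _ ihx ihy
    refine ⟨pprops_mul ihx.1 ihy.1, ?_⟩
    rw [_root_.mul_inv_rev]
    exact pprops_mul ihy.2 ihx.2
  · intro x _ ih
    refine ⟨ih.2, ?_⟩
    rw [inv_inv]
    exact ih.1

theorem filter_sub_InF {w : Wg} (hw : w ∈ Subgroup.closure Pset) :
    PosF.filter (fun v => ¬ nng (mv (ρ w) v)) ⊆ InF := by
  intro v hv
  rw [Finset.mem_filter] at hv
  obtain ⟨hvP, hneg⟩ := hv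
  have hvL : v ∈ PosL := List.mem_toFinset.mp hvP
  have h0 : 0 ≤ v 1 := pos_nng v hvL 1
  rcases eq_or_lt_of_le h0 with h | h
  · exact Finset.mem_filter.mpr ⟨hvP, h.symm⟩
  · exfalso
    have := ((pprops_closure hw).1.1 v hvL h).1
    exact hneg (pos_nng _ this)

theorem length_le_15 {w : Wg} (hw : w ∈ Subgroup.closure Pset) : ℓ w ≤ 15 := by
  rw [length_invn]
  unfold invn
  calc (PosF.filter _).card ≤ InF.card := Finset.card_le_card (filter_sub_InF hw)
  _ = 15 := incard

theorem word_mem_closure (ω : List (Fin 6)) (h : ∀ i ∈ ω, σ i ∈ Pset) :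
    π ω ∈ Subgroup.closure Pset := by
  induction ω with
  | nil => rw [cs.wordProd_nil]; exact one_mem _
  | cons i ω ih =>
      rw [cs.wordProd_cons]
      exact mul_mem (Subgroup.subset_closure (h i (List.mem_cons_self)))
        (ih fun j hj => h j (List.mem_cons_of_mem i hj))

theorem U0_mem : π u0w ∈ Subgroup.closure Pset := by
  apply word_mem_closure
  intro i hi
  rcases u0w_letters i hi with rfl | rfl | rfl | rfl | rfl <;> simp [Pset]

theorem length_U0 : ℓ (π u0w) = 15 := by
  rw [length_invn, rho_U0]
  unfold invn
  have hfe : PosF.filter (fun v => ¬ nng (mv U0m v)) = InF := by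
    apply Finset.filter_congr
    intro v hv
    simpa using u0_inv_iff v (List.mem_toFinset.mp hv)
  rw [hfe]
  exact incard

theorem u_unique (u : Wg) (hu : u ∈ Subgroup.closure Pset)
    (humax : ∀ v ∈ Subgroup.closure Pset, ℓ v ≤ ℓ u) : u = π u0w := by
  have hge : 15 ≤ ℓ u := length_U0 ▸ humax (π u0w) U0_mem
  have hle := length_le_15 hu
  have heq : invn (ρ u) = 15 := by
    have := length_invn u
    omega
  have hall : ∀ v ∈ InF, ¬ nng (mv (ρ u) v) := by
    unfold invn at heq
    have hfil : PosF.filter (fun v => ¬ nng (mv (ρ u) v)) = InF := by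
      apply Finset.eq_of_subset_of_card_le (filter_sub_InF hu)
      rw [heq, incard]
    intro v hv
    have hv2 : v ∈ PosF.filter (fun v => ¬ nng (mv (ρ u) v)) := by rw [hfil]; exact hv
    exact (Finset.mem_filter.mp hv2).2
  have hx1 : (π u0w)⁻¹ * u = 1 := by
    apply invn_zero_imp_one
    intro v hv
    have hvL : v ∈ PosL := List.mem_toFinset.mp hv
    have hrw : mv (ρ ((π u0w)⁻¹ * u)) v = mv U0mi (mv (ρ u) v) := by
      rw [_root_.map_mul, mv_mul, rho_U0i]
    have h0 : 0 ≤ v 1 := pos_nng v hvL 1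
    rcases eq_or_lt_of_le h0 with h | h
    · have hvIn : v ∈ InF := Finset.mem_filter.mpr ⟨hv, h.symm⟩
      have hβneg := hall v hvIn
      have hβmem : mv (ρ u) v ∈ PhiL := rho_phi _ _ (pos_sub_phi _ hvL)
      have hγ : -(mv (ρ u) v) ∈ PosL := phi_dichot _ hβmem hβneg
      have hβ1 : mv (ρ u) v 1 = v 1 := (pprops_closure hu).1.2 v
      have hγ1 : (-(mv (ρ u) v)) 1 = 0 := by
        rw [Pi.neg_apply, hβ1, ← h]
        ring
      rw [hrw]
      have hre : mv U0mi (mv (ρ u) v) = -(mv U0mi (-(mv (ρ u) v))) := by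
        rw [mv_neg, neg_neg]
      rw [hre]
      exact u0i_negpos _ hγ hγ1
    · have hxP : (π u0w)⁻¹ * u ∈ Subgroup.closure Pset :=
        mul_mem (inv_mem U0_mem) hu
      have hout := ((pprops_closure hxP).1.1 v hvL h).1
      exact pos_nng _ hout
  rw [inv_mul_eq_one] at hx1
  exact hx1.symm

theorem Sg1_eq : Sg 1 = S1m := rfl

end Stmt18E6

open Stmt18E6 in
/-- In the Coxeter group `W` of type `E₆` (with simple reflections `s₁, …, s₆` in Bourbaki
numbering, here 0-indexed as `s 0, …, s 5`), let `Z` be the centralizer of `w₀` in `W`,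
and let `u` be an element of the parabolic subgroup `P` generated by
`s₁, s₃, s₄, s₅, s₆` whose length is maximal among the lengths of elements of `P`.
Then `s₂ ∈ Z`, `u ∈ Z`, and `w₀ · s₂` is conjugate to `u` by an element of `Z`, where
`w₀` is an element of maximal Coxeter length in `W`. -/
theorem stmt18 (w₀ : CoxeterMatrix.E₆.Group)
    (hw₀ : ∀ w : CoxeterMatrix.E₆.Group,
      CoxeterMatrix.E₆.toCoxeterSystem.length w ≤ CoxeterMatrix.E₆.toCoxeterSystem.length w₀)
    (u : CoxeterMatrix.E₆.Group)
    (hu : u ∈ Subgroup.closure {CoxeterMatrix.E₆.simple 0, CoxeterMatrix.E₆.simple 2,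
      CoxeterMatrix.E₆.simple 3, CoxeterMatrix.E₆.simple 4, CoxeterMatrix.E₆.simple 5})
    (humax : ∀ v ∈ Subgroup.closure {CoxeterMatrix.E₆.simple 0, CoxeterMatrix.E₆.simple 2,
        CoxeterMatrix.E₆.simple 3, CoxeterMatrix.E₆.simple 4, CoxeterMatrix.E₆.simple 5},
      CoxeterMatrix.E₆.toCoxeterSystem.length v ≤ CoxeterMatrix.E₆.toCoxeterSystem.length u) :
    CoxeterMatrix.E₆.simple 1 ∈ Subgroup.centralizer {w₀} ∧
    u ∈ Subgroup.centralizer {w₀} ∧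
    ∃ g ∈ Subgroup.centralizer {w₀},
      g * (w₀ * CoxeterMatrix.E₆.simple 1) * g⁻¹ = u := by
  have hsimple : CoxeterMatrix.E₆.simple = Stmt18E6.cs.simple := rfl
  have hw0 : w₀ = Stmt18E6.cs.wordProd Stmt18E6.w0w := Stmt18E6.w0_unique w₀ hw₀
  have hueq : u = Stmt18E6.cs.wordProd Stmt18E6.u0w := Stmt18E6.u_unique u hu humax
  subst hw0
  subst hueq
  rw [hsimple]
  refine ⟨?_, ?_, Stmt18E6.cs.wordProd Stmt18E6.g0w, ?_, ?_⟩
  · rw [Subgroup.mem_centralizer_iff]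
    intro h hh
    rw [Set.mem_singleton_iff] at hh
    subst hh
    apply Stmt18E6.rho_inj
    rw [_root_.map_mul, _root_.map_mul, Stmt18E6.rho_W0, Stmt18E6.rho_simple, Stmt18E6.Sg1_eq]
    exact Stmt18E6.comm_mats.1.symm
  · rw [Subgroup.mem_centralizer_iff]
    intro h hh
    rw [Set.mem_singleton_iff] at hh
    subst hh
    apply Stmt18E6.rho_inj
    rw [_root_.map_mul, _root_.map_mul, Stmt18E6.rho_W0, Stmt18E6.rho_U0]
    exact Stmt18E6.comm_mats.2.1.symm
  · rw [Subgroup.mem_centralizer_iff]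
    intro h hh
    rw [Set.mem_singleton_iff] at hh
    subst hh
    apply Stmt18E6.rho_inj
    rw [_root_.map_mul, _root_.map_mul, Stmt18E6.rho_W0, Stmt18E6.rho_G0]
    exact Stmt18E6.comm_mats.2.2.1.symm
  · rw [mul_inv_eq_iff_eq_mul]
    apply Stmt18E6.rho_inj
    rw [_root_.map_mul, _root_.map_mul, _root_.map_mul, Stmt18E6.rho_G0, Stmt18E6.rho_W0, Stmt18E6.rho_U0,
      Stmt18E6.rho_simple, Stmt18E6.Sg1_eq]
    exact Stmt18E6.comm_mats.2.2.2
end
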